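/- Let n ≥ 1 and let U, V be 2^n × 2^n unitary matrices. Then C_LHST(U,V) ≤ C_HST(U,V) ≤ n · C_LHST(U,V). -/

import Mathlib

open Matrix Kronecker Complex

noncomputable section

/-- The Hilbert-Schmidt test cost `C_HST(U,V) = 1 - |Tr(V†U)|²/d²` for `d × d` matrices. -/
def CHSTd (d : ℕ) (U V : Matrix (Fin d) (Fin d) ℂ) : ℝ :=
  1 - ‖(Vᴴ * U).trace‖ ^ 2 / (d : ℝ) ^ 2

/-- The Hilbert-Schmidt test cost for unitaries on `n` qubits (`d = 2^n`). -/
def CHST (n : ℕ) (U V : Matrix (Fin n → Fin 2) (Fin n → Fin 2) ℂ) : ℝ :=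
  1 - ‖(Vᴴ * U).trace‖ ^ 2 / ((2 : ℝ) ^ n) ^ 2

/-- The local channel `E_j(ρ) = Tr_{j̄}[ W (ρ_(j) ⊗ I/2^(n-1)) W† ]`, where `ρ` is placed on
qubit `j`, the maximally mixed state on the other qubits, and the partial trace is over all
qubits except `j`.  (The sum over `r` double-counts the assignments of the qubits other than
`j`, whence the extra factor `1/2`.) -/
def Ej (n : ℕ) (j : Fin n) (W : Matrix (Fin n → Fin 2) (Fin n → Fin 2) ℂ)
    (ρ : Matrix (Fin 2) (Fin 2) ℂ) : Matrix (Fin 2) (Fin 2) ℂ :=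
  Matrix.of fun a b =>
    (1 / 2 ^ (n - 1) : ℂ) * (1 / 2) *
      ∑ r : Fin n → Fin 2, ∑ s : Fin n → Fin 2, ∑ t : Fin n → Fin 2,
        (if Function.update s j 0 = Function.update t j 0 then
          W (Function.update r j a) s * ρ (s j) (t j) * star (W (Function.update r j b) t)
        else 0)

/-- The two-qubit maximally entangled state `|Φ₂⁺⟩ = (|00⟩+|11⟩)/√2`. -/
def phi2 : (Fin 2 × Fin 2) → ℂ := fun p => if p.1 = p.2 then ((1 / Real.sqrt 2 : ℝ) : ℂ) else 0

/-- The projector `|Φ₂⁺⟩⟨Φ₂⁺|`. -/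
def phi2Proj : Matrix (Fin 2 × Fin 2) (Fin 2 × Fin 2) ℂ :=
  Matrix.of fun p q => if p.1 = p.2 ∧ q.1 = q.2 then (1 / 2 : ℂ) else 0

/-- `(E ⊗ id)(ρ)` for a map `E` on one-qubit matrices and a two-qubit matrix `ρ`. -/
def tensorId (E : Matrix (Fin 2) (Fin 2) ℂ → Matrix (Fin 2) (Fin 2) ℂ)
    (ρ : Matrix (Fin 2 × Fin 2) (Fin 2 × Fin 2) ℂ) :
    Matrix (Fin 2 × Fin 2) (Fin 2 × Fin 2) ℂ :=
  Matrix.of fun p q => ∑ a : Fin 2, ∑ b : Fin 2,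
    ρ (a, p.2) (b, q.2) * E (Matrix.single a b 1) p.1 q.1

/-- The entanglement fidelity `F_e^(j) = ⟨Φ₂⁺|(E_j ⊗ id)(|Φ₂⁺⟩⟨Φ₂⁺|)|Φ₂⁺⟩`
(as a complex number), with `W = U V†`. -/
def FeC (n : ℕ) (j : Fin n) (U V : Matrix (Fin n → Fin 2) (Fin n → Fin 2) ℂ) : ℂ :=
  star phi2 ⬝ᵥ (tensorId (Ej n j (U * Vᴴ)) phi2Proj).mulVec phi2

/-- The entanglement fidelity `F_e^(j)` (a real number). -/
def Fe (n : ℕ) (j : Fin n) (U V : Matrix (Fin n → Fin 2) (Fin n → Fin 2) ℂ) : ℝ :=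
  (FeC n j U V).re

/-- The local Hilbert-Schmidt cost for qubit `j`: `C_LHST^(j)(U,V) = 1 - F_e^(j)`. -/
def CLHSTj (n : ℕ) (j : Fin n) (U V : Matrix (Fin n → Fin 2) (Fin n → Fin 2) ℂ) : ℝ :=
  1 - Fe n j U V

/-- The local Hilbert-Schmidt cost `C_LHST(U,V) = (1/n) Σ_j C_LHST^(j)(U,V)`. -/
def CLHST (n : ℕ) (U V : Matrix (Fin n → Fin 2) (Fin n → Fin 2) ℂ) : ℝ :=
  (1 / n : ℝ) * ∑ j : Fin n, CLHSTj n j U V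

end

noncomputable section
namespace Stmt2Aux
open Finset

variable {n : ℕ}

def s2 : ℝ := 1 / Real.sqrt 2

lemma s2_sq : s2 * s2 = 1 / 2 := by
  rw [s2, div_mul_div_comm, Real.mul_self_sqrt (by norm_num : (0:ℝ) ≤ 2)]
  norm_num

def Bm (μ : Fin 4) (x y : Fin 2) : ℝ :=
  if μ = 0 then (if x = y then s2 else 0)
  else if μ = 1 then (if x = y then (if x = 0 then s2 else -s2) else 0)
  else if μ = 2 then (if x = y then 0 else s2)
  else (if x = y then 0 else if x = 0 then s2 else -s2)

lemma Bortho (x y x' y' : Fin 2) :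
    ∑ μ : Fin 4, Bm μ x y * Bm μ x' y' = if x = x' ∧ y = y' then 1 else 0 := by
  have h := s2_sq
  fin_cases x <;> fin_cases y <;> fin_cases x' <;> fin_cases y' <;>
    simp [Fin.sum_univ_four, Bm] <;> linarith

def kSplit (n : ℕ) (j : Fin n) : (Fin n → Fin 2) ≃ (Fin 2 × ({k : Fin n // k ≠ j} → Fin 2)) where
  toFun r := (r j, fun k => r k.1)
  invFun p := fun k => if h : k = j then p.1 else p.2 ⟨k, h⟩
  left_inv r := by funext k; by_cases h : k = j <;> simp [h]
  right_inv p := by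
    ext k
    · simp
    · simp [k.2]

lemma kSplit_symm_apply_self (j : Fin n) (x : Fin 2) (u : {k : Fin n // k ≠ j} → Fin 2) :
    (kSplit n j).symm (x, u) j = x := by simp [kSplit]

lemma kSplit_symm_apply_ne (j : Fin n) (x : Fin 2) (u : {k : Fin n // k ≠ j} → Fin 2)
    (k : Fin n) (hk : k ≠ j) : (kSplit n j).symm (x, u) k = u ⟨k, hk⟩ := by simp [kSplit, hk]

lemma update_kSplit (j : Fin n) (x a : Fin 2) (u : {k : Fin n // k ≠ j} → Fin 2) :
    Function.update ((kSplit n j).symm (x, u)) j a = (kSplit n j).symm (a, u) := by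
  funext k
  by_cases h : k = j
  · subst h; simp [kSplit]
  · simp [Function.update_of_ne h, kSplit, h]

lemma kSplit_offj_eq (j : Fin n) (x y : Fin 2) (u v : {k : Fin n // k ≠ j} → Fin 2) :
    (Function.update ((kSplit n j).symm (x, u)) j 0 = Function.update ((kSplit n j).symm (y, v)) j 0)
      ↔ u = v := by
  rw [update_kSplit, update_kSplit]
  constructor
  · intro h
    exact ((Prod.mk.injEq _ _ _ _).mp ((kSplit n j).symm.injective h)).2
  · intro h; rw [h]

lemma sum_guard {α : Type*} [Fintype α] [DecidableEq α] (P : Prop) [Decidable P]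
    (f : α → ℂ) (y : α) :
    ∑ t : α, (if P then if y = t then f t else 0 else 0) = if P then f y else 0 := by
  split_ifs with h <;> simp

lemma sum_guard' {α : Type*} [Fintype α] [DecidableEq α] (P : Prop) [Decidable P]
    (f : α → ℂ) (y : α) :
    ∑ t : α, (if P then if t = y then f t else 0 else 0) = if P then f y else 0 := by
  split_ifs with h <;> simp

lemma sum_if_const (P : Prop) [Decidable P] {α : Type*} [Fintype α] (f : α → ℂ) :
    ∑ a : α, (if P then f a else 0) = if P then ∑ a : α, f a else 0 := by
  split_ifs <;> simp

lemma sum_rot4 {α β γ δ : Type*} [Fintype α] [Fintype β] [Fintype γ] [Fintype δ]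
    (f : α → β → γ → δ → ℂ) :
    ∑ x : α, ∑ w : β, ∑ u : γ, ∑ v : δ, f x w u v
      = ∑ w : β, ∑ u : γ, ∑ x : α, ∑ v : δ, f x w u v := by
  rw [Finset.sum_comm]
  exact Finset.sum_congr rfl fun w _ => Finset.sum_comm


lemma Ej_std (hn : 1 ≤ n) (j : Fin n) (W : Matrix (Fin n → Fin 2) (Fin n → Fin 2) ℂ)
    (x y : Fin 2) :
    Ej n j W (Matrix.single x y 1) x y
      = (2 / 2 ^ n : ℂ) * ∑ w : {k : Fin n // k ≠ j} → Fin 2, ∑ u : {k : Fin n // k ≠ j} → Fin 2,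
          W ((kSplit n j).symm (x, w)) ((kSplit n j).symm (x, u)) *
            (starRingEnd ℂ) (W ((kSplit n j).symm (y, w)) ((kSplit n j).symm (y, u))) := by
  have hsum : ∀ (F : (Fin n → Fin 2) → ℂ),
      ∑ r : Fin n → Fin 2, F r = ∑ p : Fin 2 × ({k : Fin n // k ≠ j} → Fin 2), F ((kSplit n j).symm p) :=
    fun F => (Equiv.sum_comp (kSplit n j).symm F).symm
  rw [Ej]
  simp only [Matrix.of_apply]
  simp only [hsum, Fintype.sum_prod_type]
  simp only [update_kSplit, kSplit_symm_apply_self, kSplit_offj_eq, Matrix.single,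
    Matrix.of_apply]
  simp only [EmbeddingLike.apply_eq_iff_eq, Prod.mk.injEq, true_and, eq_self_iff_true, ite_and,
    mul_ite, mul_zero, mul_one, ite_mul, zero_mul,
    Finset.sum_ite_eq, Finset.sum_ite_eq', Finset.mem_univ, if_true]
  simp only [sum_guard, sum_if_const, Finset.sum_ite_eq, Finset.mem_univ, if_true,
    Finset.sum_const, Finset.card_univ, Fintype.card_fin, nsmul_eq_mul, Nat.cast_ofNat,
    Complex.star_def]
  have h2 : (2:ℂ) ^ n = 2 ^ (n-1) * 2 := by rw [← pow_succ]; congr 1; omega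
  rw [h2]
  have h0 : (2:ℂ) ^ (n-1) ≠ 0 := pow_ne_zero _ two_ne_zero
  field_simp



lemma offj_iff (j : Fin n) (x y x' y' : Fin 2) (w u w' u' : {k : Fin n // k ≠ j} → Fin 2) :
    (∀ k, k ≠ j → ((kSplit n j).symm (x, w) k = (kSplit n j).symm (x', w') k ∧
        (kSplit n j).symm (y, u) k = (kSplit n j).symm (y', u') k))
      ↔ (w = w' ∧ u = u') := by
  constructor
  · intro h
    constructor
    · funext k
      have := (h k.1 k.2).1
      rwa [kSplit_symm_apply_ne j x w k.1 k.2, kSplit_symm_apply_ne j x' w' k.1 k.2,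
        Subtype.coe_eta] at this
    · funext k
      have := (h k.1 k.2).2
      rwa [kSplit_symm_apply_ne j y u k.1 k.2, kSplit_symm_apply_ne j y' u' k.1 k.2,
        Subtype.coe_eta] at this
  · rintro ⟨rfl, rfl⟩ k hk
    rw [kSplit_symm_apply_ne j x w k hk, kSplit_symm_apply_ne j x' w k hk,
      kSplit_symm_apply_ne j y u k hk, kSplit_symm_apply_ne j y' u k hk]
    exact ⟨rfl, rfl⟩

lemma sum_swap4 {α β γ δ : Type*} [Fintype α] [Fintype β] [Fintype γ] [Fintype δ]
    (f : α → β → γ → δ → ℂ) :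
    ∑ x : α, ∑ y : β, ∑ w : γ, ∑ u : δ, f x y w u
      = ∑ w : γ, ∑ u : δ, ∑ x : α, ∑ y : β, f x y w u := by
  have h1 : ∀ x, ∑ y : β, ∑ w : γ, ∑ u : δ, f x y w u
      = ∑ w : γ, ∑ u : δ, ∑ y : β, f x y w u := by
    intro x
    rw [Finset.sum_comm]
    exact Finset.sum_congr rfl fun w _ => Finset.sum_comm
  simp only [h1]
  rw [Finset.sum_comm]
  exact Finset.sum_congr rfl fun w _ => Finset.sum_comm

def NF (n : ℕ) (j : Fin n) (W : Matrix (Fin n → Fin 2) (Fin n → Fin 2) ℂ) : ℂ :=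
  ∑ w : {k : Fin n // k ≠ j} → Fin 2, ∑ u : {k : Fin n // k ≠ j} → Fin 2,
    (∑ x : Fin 2, W ((kSplit n j).symm (x, w)) ((kSplit n j).symm (x, u))) *
      (starRingEnd ℂ) (∑ y : Fin 2, W ((kSplit n j).symm (y, w)) ((kSplit n j).symm (y, u)))

lemma FeC_eq (hn : 1 ≤ n) (j : Fin n) (U V : Matrix (Fin n → Fin 2) (Fin n → Fin 2) ℂ) :
    FeC n j U V = NF n j (U * Vᴴ) / 2 ^ (n + 1) := by
  rw [FeC]
  simp only [dotProduct, Matrix.mulVec, Pi.star_apply, Fintype.sum_prod_type,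
    tensorId, phi2Proj, phi2, Matrix.of_apply]
  simp only [apply_ite (star : ℂ → ℂ), star_zero, Complex.star_def, Complex.conj_ofReal,
    ite_and, mul_ite, ite_mul, mul_zero, zero_mul, mul_one, one_mul,
    sum_guard, sum_guard', sum_if_const, Finset.sum_ite_eq, Finset.sum_ite_eq',
    Finset.mem_univ, if_true]
  simp only [Ej_std hn, NF, Finset.mul_sum, Finset.sum_mul, Finset.sum_div, map_sum]
  rw [sum_swap4 (fun x y w u =>
    ((1 / Real.sqrt 2 : ℝ) : ℂ) * (1 / 2 * (2 / 2 ^ n *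
      ((U * Vᴴ) ((kSplit n j).symm (x, w)) ((kSplit n j).symm (x, u)) *
        (starRingEnd ℂ) ((U * Vᴴ) ((kSplit n j).symm (y, w)) ((kSplit n j).symm (y, u))))) *
      ((1 / Real.sqrt 2 : ℝ) : ℂ)))]
  refine Finset.sum_congr rfl fun w _ => Finset.sum_congr rfl fun u _ =>
    Finset.sum_comm.trans (Finset.sum_congr rfl fun x _ => Finset.sum_congr rfl fun y _ => ?_)
  have hs : ((1 / Real.sqrt 2 : ℝ) : ℂ) * ((1 / Real.sqrt 2 : ℝ) : ℂ) = 1 / 2 := by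
    rw [← Complex.ofReal_mul, div_mul_div_comm, Real.mul_self_sqrt (by norm_num : (0:ℝ) ≤ 2)]
    norm_num
  have h2 : (2 : ℂ) ^ (n + 1) = 2 * 2 ^ n := by rw [pow_succ]; ring
  rw [h2]
  linear_combination (((U * Vᴴ) ((kSplit n j).symm (y, w)) ((kSplit n j).symm (y, u)) *
    (starRingEnd ℂ) ((U * Vᴴ) ((kSplit n j).symm (x, w)) ((kSplit n j).symm (x, u)))) / (2:ℂ)^n) * hs


lemma sum_rot {α β γ : Type*} [Fintype α] [Fintype β] [Fintype γ] (f : α → β → γ → ℂ) :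
    ∑ m : α, ∑ p : β, ∑ q : γ, f m p q = ∑ p : β, ∑ q : γ, ∑ m : α, f m p q := by
  rw [Finset.sum_comm]
  exact Finset.sum_congr rfl fun p _ => Finset.sum_comm

def coeff (n : ℕ) (W : Matrix (Fin n → Fin 2) (Fin n → Fin 2) ℂ) (m : Fin n → Fin 4) : ℂ :=
  ∑ p : (Fin n → Fin 2) × (Fin n → Fin 2),
    ((∏ k, Bm (m k) (p.1 k) (p.2 k) : ℝ) : ℂ) * W p.1 p.2

lemma site_delta_real (j : Fin n) (φ : Fin 4 → ℝ) (r s r' s' : Fin n → Fin 2) :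
    ∑ m : Fin n → Fin 4,
        φ (m j) * ((∏ k, Bm (m k) (r k) (s k)) * (∏ k, Bm (m k) (r' k) (s' k)))
      = (∑ μ : Fin 4, φ μ * (Bm μ (r j) (s j) * Bm μ (r' j) (s' j))) *
          (if ∀ k, k ≠ j → (r k = r' k ∧ s k = s' k) then 1 else 0) := by
  have h1 : ∀ m : Fin n → Fin 4,
      φ (m j) * ((∏ k, Bm (m k) (r k) (s k)) * (∏ k, Bm (m k) (r' k) (s' k)))
        = ∏ k, ((if k = j then φ (m k) else 1) *
            (Bm (m k) (r k) (s k) * Bm (m k) (r' k) (s' k))) := by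
    intro m
    rw [Finset.prod_mul_distrib, Finset.prod_ite_eq' Finset.univ j (fun k => φ (m k)),
      if_pos (Finset.mem_univ j), Finset.prod_mul_distrib]
  simp only [h1]
  have h2 := Finset.prod_univ_sum (fun _ : Fin n => (Finset.univ : Finset (Fin 4)))
    (fun k μ => (if k = j then φ μ else 1) * (Bm μ (r k) (s k) * Bm μ (r' k) (s' k)))
  rw [Fintype.piFinset_univ] at h2
  rw [← h2, ← Finset.mul_prod_erase Finset.univ _ (Finset.mem_univ j)]
  congr 1
  · simp
  · have h3 : ∀ k ∈ Finset.univ.erase j,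
        (∑ μ : Fin 4, (if k = j then φ μ else 1) * (Bm μ (r k) (s k) * Bm μ (r' k) (s' k)))
          = if (r k = r' k ∧ s k = s' k) then 1 else 0 := by
      intro k hk
      have hkj : k ≠ j := (Finset.mem_erase.mp hk).1
      simp only [if_neg hkj, one_mul]
      exact Bortho _ _ _ _
    rw [Finset.prod_congr rfl h3, Finset.prod_boole]
    congr 1
    simp only [eq_iff_iff]
    constructor
    · intro h k hk
      exact h k (Finset.mem_erase.mpr ⟨hk, Finset.mem_univ k⟩)
    · intro h k hk
      exact h k (Finset.mem_erase.mp hk).1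

lemma quad (j : Fin n) (φ : Fin 4 → ℝ) (W : Matrix (Fin n → Fin 2) (Fin n → Fin 2) ℂ) :
    ∑ m : Fin n → Fin 4, (φ (m j) : ℂ) * (coeff n W m * (starRingEnd ℂ) (coeff n W m))
      = ∑ p : (Fin n → Fin 2) × (Fin n → Fin 2), ∑ q : (Fin n → Fin 2) × (Fin n → Fin 2),
          (((∑ μ : Fin 4, φ μ * (Bm μ (p.1 j) (p.2 j) * Bm μ (q.1 j) (q.2 j))) : ℝ) : ℂ) *
            (if ∀ k, k ≠ j → (p.1 k = q.1 k ∧ p.2 k = q.2 k) then 1 else 0) *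
            (W p.1 p.2 * (starRingEnd ℂ) (W q.1 q.2)) := by
  simp only [coeff, map_sum, _root_.map_mul, Complex.conj_ofReal, Finset.mul_sum, Finset.sum_mul]
  refine Eq.trans (Eq.trans (sum_rot _) Finset.sum_comm) ?_
  refine Finset.sum_congr rfl fun p _ => Finset.sum_congr rfl fun q _ => ?_
  have h1 : ∀ m : Fin n → Fin 4,
      (φ (m j) : ℂ) * ((((∏ k, Bm (m k) (p.1 k) (p.2 k) : ℝ)) : ℂ) * W p.1 p.2 *
          ((((∏ k, Bm (m k) (q.1 k) (q.2 k) : ℝ)) : ℂ) * (starRingEnd ℂ) (W q.1 q.2)))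
        = (((φ (m j) * ((∏ k, Bm (m k) (p.1 k) (p.2 k)) * (∏ k, Bm (m k) (q.1 k) (q.2 k))) : ℝ)) : ℂ) *
            (W p.1 p.2 * (starRingEnd ℂ) (W q.1 q.2)) := by
    intro m
    push_cast
    ring
  rw [Finset.sum_congr rfl fun m _ => h1 m, ← Finset.sum_mul, ← Complex.ofReal_sum,
    site_delta_real j φ p.1 p.2 q.1 q.2]
  push_cast [apply_ite (Complex.ofReal : ℝ → ℂ)]
  ring

lemma parseval (j : Fin n) (W : Matrix (Fin n → Fin 2) (Fin n → Fin 2) ℂ)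
    (hW : W * Wᴴ = 1) :
    ∑ m : Fin n → Fin 4, coeff n W m * (starRingEnd ℂ) (coeff n W m) = (2 : ℂ) ^ n := by
  have h := quad j (fun _ => 1) W
  simp only [Complex.ofReal_one, one_mul] at h
  rw [h]
  have hsite : ∀ p q : (Fin n → Fin 2) × (Fin n → Fin 2),
      (∑ μ : Fin 4, (Bm μ (p.1 j) (p.2 j) * Bm μ (q.1 j) (q.2 j))) =
        if p.1 j = q.1 j ∧ p.2 j = q.2 j then 1 else 0 := by
    intro p q
    simpa using Bortho (p.1 j) (p.2 j) (q.1 j) (q.2 j)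
  simp only [hsite]
  have hdelta : ∀ p q : (Fin n → Fin 2) × (Fin n → Fin 2),
      (((if p.1 j = q.1 j ∧ p.2 j = q.2 j then (1:ℝ) else 0) : ℂ) *
        (if ∀ k, k ≠ j → (p.1 k = q.1 k ∧ p.2 k = q.2 k) then 1 else 0)) = if q = p then 1 else 0 := by
    intro p q
    have hiff : ((p.1 j = q.1 j ∧ p.2 j = q.2 j) ∧
        (∀ k, k ≠ j → (p.1 k = q.1 k ∧ p.2 k = q.2 k))) ↔ q = p := by
      constructor
      · rintro ⟨⟨ha, hb⟩, h2⟩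
        refine Prod.ext ?_ ?_
        · funext k; by_cases hk : k = j
          · subst hk; exact ha.symm
          · exact (h2 k hk).1.symm
        · funext k; by_cases hk : k = j
          · subst hk; exact hb.symm
          · exact (h2 k hk).2.symm
      · rintro rfl
        exact ⟨⟨rfl, rfl⟩, fun k _ => ⟨rfl, rfl⟩⟩
    by_cases hA : (p.1 j = q.1 j ∧ p.2 j = q.2 j) <;>
      by_cases hB : (∀ k, k ≠ j → (p.1 k = q.1 k ∧ p.2 k = q.2 k))
    · simp [hA, hB, hiff.mp ⟨hA, hB⟩]
    · have hne : ¬ q = p := fun h => hB ((hiff.mpr h).2)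
      simp [hA, hB, hne]
    · have hne : ¬ q = p := fun h => hA ((hiff.mpr h).1)
      simp [hA, hB, hne]
    · have hne : ¬ q = p := fun h => hA ((hiff.mpr h).1)
      simp [hA, hB, hne]
  simp only [apply_ite (Complex.ofReal : ℝ → ℂ), Complex.ofReal_one, Complex.ofReal_zero]
    at hdelta ⊢
  simp only [hdelta, ite_mul, one_mul, zero_mul, Finset.sum_ite_eq', Finset.mem_univ, if_true]
  rw [Fintype.sum_prod_type]
  have hrow : ∀ r : Fin n → Fin 2, ∑ s : Fin n → Fin 2, W r s * (starRingEnd ℂ) (W r s) = 1 := by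
    intro r
    have h1 := congrArg (fun M => M r r) hW
    simpa [Matrix.mul_apply, Matrix.conjTranspose_apply, Matrix.one_apply_eq] using h1
  simp only [hrow, Finset.sum_const, Finset.card_univ, nsmul_eq_mul, mul_one]
  simp [Fintype.card_fun]

lemma feSum (j : Fin n) (W : Matrix (Fin n → Fin 2) (Fin n → Fin 2) ℂ) :
    ∑ m : Fin n → Fin 4, (if m j = 0 then coeff n W m * (starRingEnd ℂ) (coeff n W m) else 0)
      = NF n j W / 2 := by
  have h := quad j (fun μ => if μ = 0 then (1:ℝ) else 0) W
  simp only [apply_ite (Complex.ofReal : ℝ → ℂ), Complex.ofReal_one, Complex.ofReal_zero,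
    ite_mul, one_mul, zero_mul, Finset.sum_ite_eq', Finset.mem_univ, if_true] at h
  rw [h]
  have hsum : ∀ (F : (Fin n → Fin 2) → ℂ),
      ∑ r : Fin n → Fin 2, F r
        = ∑ p : Fin 2 × ({k : Fin n // k ≠ j} → Fin 2), F ((kSplit n j).symm p) :=
    fun F => (Equiv.sum_comp (kSplit n j).symm F).symm
  simp only [Fintype.sum_prod_type]
  simp only [hsum, Fintype.sum_prod_type]
  simp only [Bm, if_pos, kSplit_symm_apply_self, offj_iff, if_true]
  simp only [ite_and, Complex.ofReal_mul, apply_ite (Complex.ofReal : ℝ → ℂ), Complex.ofReal_zero,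
    mul_ite, ite_mul, zero_mul, mul_zero, zero_mul,
    sum_guard, sum_guard', sum_if_const, Finset.sum_ite_eq, Finset.sum_ite_eq',
    Finset.mem_univ, if_true]
  simp only [NF, map_sum, Finset.sum_mul, Finset.mul_sum, Finset.sum_div]
  refine Eq.trans (sum_rot4 _) ?_
  refine Finset.sum_congr rfl fun w _ => Finset.sum_congr rfl fun u _ =>
    Finset.sum_comm.trans (Finset.sum_congr rfl fun a _ => Finset.sum_congr rfl fun b _ => ?_)
  have hs : ((s2 : ℝ) : ℂ) * ((s2 : ℝ) : ℂ) = 1 / 2 := by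
    rw [← Complex.ofReal_mul, s2_sq]
    norm_num
  linear_combination (W ((kSplit n j).symm (b, w)) ((kSplit n j).symm (b, u)) *
    (starRingEnd ℂ) (W ((kSplit n j).symm (a, w)) ((kSplit n j).symm (a, u)))) * hs

lemma coeff_zero (W : Matrix (Fin n → Fin 2) (Fin n → Fin 2) ℂ) :
    coeff n W (fun _ => 0) * (starRingEnd ℂ) (coeff n W (fun _ => 0))
      = (((1 / 2 : ℝ) ^ n : ℝ) : ℂ) * (W.trace * (starRingEnd ℂ) W.trace) := by
  have hprod : ∀ r s : Fin n → Fin 2,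
      (∏ k, Bm 0 (r k) (s k)) = if r = s then s2 ^ n else 0 := by
    intro r s
    by_cases h : r = s
    · subst h
      simp [Bm, Finset.prod_const, Finset.card_univ, Fintype.card_fun]
    · obtain ⟨k, hk⟩ := Function.ne_iff.mp h
      rw [if_neg h]
      exact Finset.prod_eq_zero (Finset.mem_univ k) (by simp [Bm, hk])
  have hc : coeff n W (fun _ => 0) = ((s2 ^ n : ℝ) : ℂ) * W.trace := by
    rw [coeff, Fintype.sum_prod_type]
    simp only [hprod, apply_ite (Complex.ofReal : ℝ → ℂ), Complex.ofReal_zero, ite_mul, zero_mul,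
      Finset.sum_ite_eq, Finset.mem_univ, if_true, Matrix.trace, Matrix.diag, Finset.mul_sum]
  rw [hc, _root_.map_mul, Complex.conj_ofReal]
  have : ((s2 ^ n : ℝ) : ℂ) * (((s2 ^ n : ℝ)) : ℂ) = (((1 / 2 : ℝ) ^ n : ℝ) : ℂ) := by
    rw [← Complex.ofReal_mul, ← mul_pow, s2_sq]
  linear_combination (W.trace * (starRingEnd ℂ) W.trace) * this

end Stmt2Aux
end

noncomputable section

/-- For unitaries `U`, `V` on `n ≥ 1` qubits,
`C_LHST(U,V) ≤ C_HST(U,V) ≤ n · C_LHST(U,V)`. -/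
theorem stmt2 (n : ℕ) (hn : 1 ≤ n)
    (U V : Matrix (Fin n → Fin 2) (Fin n → Fin 2) ℂ)
    (hU : U ∈ Matrix.unitaryGroup (Fin n → Fin 2) ℂ)
    (hV : V ∈ Matrix.unitaryGroup (Fin n → Fin 2) ℂ) :
    CLHST n U V ≤ CHST n U V ∧ CHST n U V ≤ (n : ℝ) * CLHST n U V := by
  classical
  set W := U * Vᴴ with hWdef
  have hU' : U * Uᴴ = 1 := by
    have := Matrix.mem_unitaryGroup_iff.mp hU
    rwa [Matrix.star_eq_conjTranspose] at this
  have hV' : Vᴴ * V = 1 := by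
    have := Matrix.mem_unitaryGroup_iff'.mp hV
    rwa [Matrix.star_eq_conjTranspose] at this
  have hWu : W * Wᴴ = 1 := by
    calc W * Wᴴ = U * (Vᴴ * V) * Uᴴ := by
          rw [hWdef, Matrix.conjTranspose_mul, Matrix.conjTranspose_conjTranspose]
          rw [Matrix.mul_assoc, Matrix.mul_assoc, Matrix.mul_assoc]
      _ = 1 := by rw [hV', Matrix.mul_one, hU']
  set z : Fin n → Fin 4 := fun _ => 0 with hzdef
  set q : (Fin n → Fin 4) → ℝ := fun m => Complex.normSq (Stmt2Aux.coeff n W m) with hqdef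
  have hq0 : ∀ m, 0 ≤ q m := fun m => Complex.normSq_nonneg _
  have j0 : Fin n := ⟨0, hn⟩
  have h2n : (0:ℝ) < 2 ^ n := by positivity
  -- Parseval
  have hP : ∑ m : Fin n → Fin 4, q m = 2 ^ n := by
    have h := Stmt2Aux.parseval j0 W hWu
    simp only [Complex.mul_conj] at h
    rw [← Complex.ofReal_sum] at h
    exact_mod_cast h
  -- Fe formula
  have hFe : ∀ j : Fin n, Fe n j U V = (∑ m : Fin n → Fin 4, if m j = 0 then q m else 0) / 2 ^ n := by
    intro j
    have h1 := Stmt2Aux.FeC_eq hn j U V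
    have h2 := Stmt2Aux.feSum j W
    have h4 : Stmt2Aux.NF n j W
        = 2 * ∑ m : Fin n → Fin 4,
            (if m j = 0 then Stmt2Aux.coeff n W m * (starRingEnd ℂ) (Stmt2Aux.coeff n W m) else 0) := by
      rw [h2]; ring
    have h5 : FeC n j U V
        = ((∑ m : Fin n → Fin 4, if m j = 0 then q m else 0 : ℝ) : ℂ) / ((2:ℝ)^n : ℝ) := by
      rw [h1, ← hWdef, h4]
      simp only [Complex.mul_conj]
      rw [pow_succ]
      have hne : (2:ℂ)^n ≠ 0 := pow_ne_zero _ two_ne_zero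
      push_cast [apply_ite (Complex.ofReal : ℝ → ℂ)]
      field_simp
      ring
    rw [Fe, h5, ← Complex.ofReal_div, Complex.ofReal_re]
  -- trace formula
  have hT : q z = ‖(Vᴴ * U).trace‖ ^ 2 / 2 ^ n := by
    have h := Stmt2Aux.coeff_zero W
    rw [show (W.trace * (starRingEnd ℂ) W.trace) = ((Complex.normSq W.trace : ℝ) : ℂ) by
      rw [Complex.mul_conj]] at h
    rw [show Stmt2Aux.coeff n W (fun _ => 0) * (starRingEnd ℂ) (Stmt2Aux.coeff n W (fun _ => 0))
      = ((q z : ℝ) : ℂ) by rw [hqdef, Complex.mul_conj]] at h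
    rw [← Complex.ofReal_mul] at h
    have h' : q z = (1/2)^n * Complex.normSq W.trace := by exact_mod_cast h
    rw [h']
    have htr : W.trace = (Vᴴ * U).trace := by rw [hWdef, Matrix.trace_mul_comm]
    rw [htr, Complex.normSq_eq_norm_sq]
    rw [div_pow, one_pow]
    field_simp
  -- cost formulas
  have hsplitP : q z + ∑ m ∈ Finset.univ.erase z, q m = 2 ^ n := by
    rw [Finset.add_sum_erase _ q (Finset.mem_univ z)]; exact hP
  have hCH : CHST n U V = (∑ m ∈ Finset.univ.erase z, q m) / 2 ^ n := by
    rw [CHST]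
    have htr2 : ‖(Vᴴ * U).trace‖ ^ 2 = q z * 2 ^ n := by rw [hT]; field_simp
    have hE : ∑ m ∈ Finset.univ.erase z, q m = 2 ^ n - q z := by linarith [hsplitP]
    rw [htr2, hE]
    have hne : (2:ℝ) ^ n ≠ 0 := ne_of_gt h2n
    field_simp
  have hCLj : ∀ j : Fin n, CLHSTj n j U V
      = (∑ m : Fin n → Fin 4, if m j = 0 then 0 else q m) / 2 ^ n := by
    intro j
    rw [CLHSTj, hFe j]
    have hsp : (∑ m : Fin n → Fin 4, if m j = 0 then q m else 0)
        + (∑ m : Fin n → Fin 4, if m j = 0 then 0 else q m) = 2 ^ n := by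
      rw [← Finset.sum_add_distrib, ← hP]
      refine Finset.sum_congr rfl fun m _ => ?_
      split_ifs <;> ring
    field_simp
    linarith [hsp]
  -- inequality 1
  have hBle : ∀ j : Fin n, (∑ m : Fin n → Fin 4, if m j = 0 then 0 else q m)
      ≤ ∑ m ∈ Finset.univ.erase z, q m := by
    intro j
    have hrw : (∑ m : Fin n → Fin 4, if m j = 0 then 0 else q m)
        = ∑ m ∈ Finset.univ.filter (fun m : Fin n → Fin 4 => ¬ m j = 0), q m := by
      rw [Finset.sum_filter]
      refine Finset.sum_congr rfl fun m _ => ?_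
      split_ifs <;> rfl
    rw [hrw]
    refine Finset.sum_le_sum_of_subset_of_nonneg ?_ fun m _ _ => hq0 m
    intro m hm
    rw [Finset.mem_filter] at hm
    refine Finset.mem_erase.mpr ⟨?_, Finset.mem_univ m⟩
    intro hmz
    exact hm.2 (by rw [hmz])
  have h1 : ∀ j : Fin n, CLHSTj n j U V ≤ CHST n U V := by
    intro j
    rw [hCLj j, hCH]
    gcongr
    exact hBle j
  refine ⟨?_, ?_⟩
  · -- first inequality
    rw [CLHST]
    have hnpos : (0:ℝ) < n := by exact_mod_cast hn
    calc (1 / n : ℝ) * ∑ j : Fin n, CLHSTj n j U V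
        ≤ (1 / n : ℝ) * ∑ _j : Fin n, CHST n U V := by
          refine mul_le_mul_of_nonneg_left (Finset.sum_le_sum fun j _ => h1 j) (by positivity)
      _ = CHST n U V := by
          rw [Finset.sum_const, Finset.card_univ, Fintype.card_fin, nsmul_eq_mul]
          field_simp
  · -- second inequality
    have key2 : (∑ m ∈ Finset.univ.erase z, q m)
        ≤ ∑ j : Fin n, ∑ m : Fin n → Fin 4, (if m j = 0 then 0 else q m) := by
      have hswap : ∑ j : Fin n, ∑ m : Fin n → Fin 4, (if m j = 0 then 0 else q m)
          = ∑ m : Fin n → Fin 4, ∑ j : Fin n, (if m j = 0 then 0 else q m) := Finset.sum_comm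
      rw [hswap]
      refine le_trans (Finset.sum_le_sum fun m hm => ?_)
        (Finset.sum_le_sum_of_subset_of_nonneg (Finset.erase_subset _ _)
          fun m _ _ => Finset.sum_nonneg fun j _ => by
            split_ifs
            · exact le_rfl
            · exact hq0 m)
      have hmz : m ≠ z := (Finset.mem_erase.mp hm).1
      obtain ⟨j', hj'⟩ := Function.ne_iff.mp hmz
      calc q m = (if m j' = 0 then 0 else q m) := by rw [if_neg hj']
        _ ≤ ∑ j : Fin n, (if m j = 0 then 0 else q m) := by
            refine Finset.single_le_sum (f := fun j : Fin n => if m j = 0 then (0:ℝ) else q m)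
              (fun j _ => ?_) (Finset.mem_univ j')
            by_cases h : m j = 0 <;> simp [h, hq0 m]
    have hnne : (n:ℝ) ≠ 0 := Nat.cast_ne_zero.mpr (by omega)
    rw [hCH, CLHST]
    have hmul : (n:ℝ) * ((1 / n : ℝ) * ∑ j : Fin n, CLHSTj n j U V)
        = ∑ j : Fin n, CLHSTj n j U V := by field_simp
    rw [hmul]
    calc (∑ m ∈ Finset.univ.erase z, q m) / 2 ^ n
        ≤ (∑ j : Fin n, ∑ m : Fin n → Fin 4, (if m j = 0 then 0 else q m)) / 2 ^ n :=
          div_le_div_of_nonneg_right key2 h2n.le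
      _ = ∑ j : Fin n, CLHSTj n j U V := by
          rw [Finset.sum_div]
          exact Finset.sum_congr rfl fun j _ => (hCLj j).symm

end
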